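/- arXiv:1108.0692 — 2 statements merged into one kernel-verified Lean document; each statement's English description precedes it below -/
import Mathlib

section
/- Let G be a group and A an abelian normal subgroup of G. Let t, u ∈ G with tu = ut, and let a, b ∈ A. Then for every c ≥ 1, the Malcev law M_c(x,y) holds for the substitution x = ta, y = ub (i.e. α_c(ta,ub) = β_c(ta,ub)) if and only if a^{f_c(u,t)} = b^{f_c(t,u)}, where f_c is evaluated at the conjugation automorphisms induced by t and u on A. -/
open scoped IsMulCommutative

/-- Malcev word pair `(α_c, β_c)`. -/
def malcevPair {G : Type*} [Monoid G] (c : ℕ) (x y : G) : G × G :=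
  Nat.rec (x, y) (fun _ p => (p.1 * p.2, p.2 * p.1)) c

/-- The Malcev word `α_c(x,y)`. -/
def malcevAlpha {G : Type*} [Monoid G] (c : ℕ) (x y : G) : G := (malcevPair c x y).1

/-- The Malcev word `β_c(x,y)`. -/
def malcevBeta {G : Type*} [Monoid G] (c : ℕ) (x y : G) : G := (malcevPair c x y).2

/-- The evaluation of `f_c(X,Y) = (X-1)·∏_{i=0}^{c-2}(X^{2^i}Y^{2^i}-1)` at two
elements of a (possibly noncommutative) ring. -/
def fEval {R : Type*} [Ring R] (c : ℕ) (t u : R) : R :=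
  (t - 1) * ((List.range (c - 1)).map fun i => t ^ 2 ^ i * u ^ 2 ^ i - 1).prod

/-- The endomorphism of the abelian normal subgroup `A` (written additively)
induced by conjugation by `t`, i.e. `a ↦ a^t = t⁻¹ * a * t`. -/
def conjEnd {G : Type*} [Group G] (A : Subgroup G) [hN : A.Normal] [IsMulCommutative A]
    (t : G) : AddMonoid.End (Additive A) :=
  AddMonoidHom.mk'
    (fun a => Additive.ofMul (⟨t⁻¹ * ((Additive.toMul a : A) : G) * t, by
      simpa using hN.conj_mem _ (Additive.toMul a).2 t⁻¹⟩ : A))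
    (fun a b => congrArg Additive.ofMul (Subtype.ext (by
      show t⁻¹ * ((Additive.toMul a * Additive.toMul b : A) : G) * t = _
      simp only [toMul_ofMul, Subgroup.coe_mul]
      group)))


section Aux
variable {G : Type*} [Group G] (A : Subgroup G) [A.Normal] [IsMulCommutative A]

lemma conjEnd_apply (t : G) (a : Additive A) :
    ((Additive.toMul (conjEnd A t a) : A) : G) = t⁻¹ * ((Additive.toMul a : A) : G) * t := rfl

lemma conjEnd_mul (x y : G) : conjEnd A (x * y) = conjEnd A y * conjEnd A x := by
  refine AddMonoidHom.ext fun c => ?_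
  refine congrArg Additive.ofMul (Subtype.ext ?_)
  show (x*y)⁻¹ * ((Additive.toMul c : A) : G) * (x*y)
      = y⁻¹ * (x⁻¹ * ((Additive.toMul c : A) : G) * x) * y
  group

lemma conjEnd_pow (x : G) (n : ℕ) : conjEnd A (x ^ n) = (conjEnd A x) ^ n := by
  induction n with
  | zero =>
    refine AddMonoidHom.ext fun c => ?_
    refine congrArg Additive.ofMul (Subtype.ext ?_)
    show (x^0)⁻¹ * ((Additive.toMul c : A) : G) * (x^0) = ((Additive.toMul c : A) : G)
    group
  | succ n ih =>
    rw [pow_succ, conjEnd_mul, ih, pow_succ']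

end Aux
lemma fEval_one {R : Type*} [Ring R] (X Y : R) : fEval 1 X Y = X - 1 := by
  simp [fEval]

lemma fEval_succ {R : Type*} [Ring R] (X Y : R) (h : Commute X Y) (n : ℕ) :
    fEval (n + 2) X Y = (X ^ 2 ^ n * Y ^ 2 ^ n - 1) * fEval (n + 1) X Y := by
  have key : ∀ i : ℕ, Commute (X ^ 2 ^ n * Y ^ 2 ^ n - 1) (X ^ 2 ^ i * Y ^ 2 ^ i - 1) := by
    intro i
    exact ((((Commute.refl X).pow_pow _ _).mul_right (h.pow_pow _ _)).mul_left
      ((h.symm.pow_pow _ _).mul_right ((Commute.refl Y).pow_pow _ _))).sub_left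
      (Commute.one_left _) |>.sub_right (Commute.one_right _)
  have hX : Commute (X ^ 2 ^ n * Y ^ 2 ^ n - 1) (X - 1) :=
    ((((Commute.refl X).pow_left _).mul_left (h.symm.pow_left _)).sub_left
      (Commute.one_left _)).sub_right (Commute.one_right _)
  have hP : Commute (X ^ 2 ^ n * Y ^ 2 ^ n - 1)
      ((List.range n).map fun i => X ^ 2 ^ i * Y ^ 2 ^ i - 1).prod := by
    refine Commute.list_prod_right _ _ fun z hz => ?_
    simp only [List.mem_map] at hz
    obtain ⟨i, -, rfl⟩ := hz
    exact key i
  show (X - 1) * _ = _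
  have h2 : n + 2 - 1 = n + 1 := rfl
  rw [h2, List.range_succ, List.map_append, List.prod_append]
  simp only [List.map_cons, List.map_nil, List.prod_cons, List.prod_nil, mul_one,
    Nat.add_sub_cancel]
  rw [← hP.eq, ← mul_assoc, ← hX.eq, mul_assoc]
  rfl
lemma End_mul_apply {M : Type*} [AddCommMonoid M] (f g : AddMonoid.End M) (m : M) :
    (f * g) m = f (g m) := rfl
lemma End_sub_apply {M : Type*} [AddCommGroup M] (f g : AddMonoid.End M) (m : M) :
    (f - g) m = f m - g m := rfl

lemma malcev_key {G : Type*} [Group G] (A : Subgroup G) [A.Normal] [IsMulCommutative A]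
    (t u : G) (htu : t * u = u * t) (a b : A) (n : ℕ) :
    ∃ p q : A,
      malcevAlpha (n + 1) (t * (a : G)) (u * (b : G)) = t ^ 2 ^ n * u ^ 2 ^ n * (p : G) ∧
      malcevBeta (n + 1) (t * (a : G)) (u * (b : G)) = t ^ 2 ^ n * u ^ 2 ^ n * (q : G) ∧
      Additive.ofMul p - Additive.ofMul q =
        fEval (n + 1) (conjEnd A u) (conjEnd A t) (Additive.ofMul a) -
          fEval (n + 1) (conjEnd A t) (conjEnd A u) (Additive.ofMul b) := by
  have htu' : Commute t u := htu
  have hTU : Commute (conjEnd A t) (conjEnd A u) := by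
    show _ = _
    rw [← conjEnd_mul, ← conjEnd_mul, htu]
  induction n with
  | zero =>
    refine ⟨Additive.toMul (conjEnd A u (Additive.ofMul a)) * b,
            Additive.toMul (conjEnd A t (Additive.ofMul b)) * a, ?_, ?_, ?_⟩
    · show t * ↑a * (u * ↑b) = _
      rw [Subgroup.coe_mul, conjEnd_apply]
      show _ = t ^ 1 * u ^ 1 * (u⁻¹ * ((a : A) : G) * u * ↑b)
      group
    · show u * ↑b * (t * ↑a) = _
      rw [Subgroup.coe_mul, conjEnd_apply]
      show _ = t ^ 1 * u ^ 1 * (t⁻¹ * ((b : A) : G) * t * ↑a)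
      rw [pow_one, pow_one, htu]
      group
    · rw [fEval_one, fEval_one, ofMul_mul, ofMul_mul, End_sub_apply,
        End_sub_apply, AddMonoid.End.one_apply, AddMonoid.End.one_apply,
        ofMul_toMul, ofMul_toMul]
      abel
  | succ n ih =>
    obtain ⟨p, q, hα, hβ, hd⟩ := ih
    set s := t ^ 2 ^ n * u ^ 2 ^ n with hs
    set S := conjEnd A s with hSdef
    have hS : S = (conjEnd A u) ^ 2 ^ n * (conjEnd A t) ^ 2 ^ n := by
      rw [hSdef, hs, conjEnd_mul, conjEnd_pow, conjEnd_pow]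
    have hss : t ^ 2 ^ (n + 1) * u ^ 2 ^ (n + 1) = s * s := by
      have h2 : 2 ^ (n + 1) = 2 ^ n + 2 ^ n := by ring
      rw [h2, pow_add, pow_add, hs]
      conv_rhs => rw [mul_assoc, ← mul_assoc (u ^ 2 ^ n), (htu'.symm.pow_pow _ _).eq,
        mul_assoc, ← mul_assoc]
    have hcoe : ∀ x y : A, ((Additive.toMul (S (Additive.ofMul x) + Additive.ofMul y) : A) : G)
        = s⁻¹ * (x : G) * s * (y : G) := by
      intro x y
      rw [toMul_add, Subgroup.coe_mul, toMul_ofMul, conjEnd_apply]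
      rfl
    refine ⟨Additive.toMul (S (Additive.ofMul p) + Additive.ofMul q),
            Additive.toMul (S (Additive.ofMul q) + Additive.ofMul p), ?_, ?_, ?_⟩
    · show malcevAlpha (n + 1) _ _ * malcevBeta (n + 1) _ _ = _
      rw [hα, hβ, hss, hcoe]
      group
    · show malcevBeta (n + 1) _ _ * malcevAlpha (n + 1) _ _ = _
      rw [hα, hβ, hss, hcoe]
      group
    · rw [ofMul_toMul, ofMul_toMul]
      have step : S (Additive.ofMul p) + Additive.ofMul q
          - (S (Additive.ofMul q) + Additive.ofMul p)
          = (S - 1) (Additive.ofMul p - Additive.ofMul q) := by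
        rw [End_sub_apply, AddMonoid.End.one_apply, map_sub]
        abel
      rw [step, hd, map_sub, ← End_mul_apply, ← End_mul_apply]
      have e1 : (S - 1) * fEval (n + 1) (conjEnd A u) (conjEnd A t)
          = fEval (n + 2) (conjEnd A u) (conjEnd A t) := by
        rw [fEval_succ _ _ hTU.symm, hS]
      have e2 : (S - 1) * fEval (n + 1) (conjEnd A t) (conjEnd A u)
          = fEval (n + 2) (conjEnd A t) (conjEnd A u) := by
        rw [fEval_succ _ _ hTU, hS, (hTU.pow_pow _ _).eq]
      rw [e1, e2]
theorem malcev_law_substitution_iff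
    {G : Type*} [Group G] (A : Subgroup G) [A.Normal] [IsMulCommutative A]
    (t u : G) (htu : t * u = u * t) (a b : A) (c : ℕ) (hc : 1 ≤ c) :
    malcevAlpha c (t * (a : G)) (u * (b : G)) = malcevBeta c (t * (a : G)) (u * (b : G)) ↔
      Additive.toMul (fEval c (conjEnd A u) (conjEnd A t) (Additive.ofMul a)) =
        Additive.toMul (fEval c (conjEnd A t) (conjEnd A u) (Additive.ofMul b)) := by
  obtain ⟨n, rfl⟩ : ∃ n, c = n + 1 := ⟨c - 1, by omega⟩
  obtain ⟨p, q, hα, hβ, hd⟩ := malcev_key A t u htu a b n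
  rw [hα, hβ, mul_right_inj]
  constructor
  · intro h
    have h0 : Additive.ofMul p - Additive.ofMul q = 0 := by
      rw [Subtype.coe_inj.mp h, sub_self]
    rw [hd, sub_eq_zero] at h0
    exact congrArg Additive.toMul h0
  · intro h
    have h' : fEval (n + 1) (conjEnd A u) (conjEnd A t) (Additive.ofMul a)
        = fEval (n + 1) (conjEnd A t) (conjEnd A u) (Additive.ofMul b) := by
      have := congrArg Additive.ofMul h
      simpa using this
    have h0 : Additive.ofMul p - Additive.ofMul q = 0 := by rw [hd, h', sub_self]
    rw [sub_eq_zero] at h0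
    exact Subtype.coe_inj.mpr (congrArg Additive.toMul h0)
end

section
/- Let n ≥ c ≥ 3 be integers, let 𝔠 be the monomial ideal of ℚ[X_1, …, X_n] generated by all monomials X_1^{i_1}⋯X_n^{i_n} with i_1 + ⋯ + i_n = c and i_j ≥ 2 for some j, and let A = ℚ[X_1, …, X_n]/𝔠. For each i, let t_i be the ℚ-linear endomorphism of A given by multiplication by the class of X_i + 1. Then the t_i are pairwise commuting invertible endomorphisms satisfying (t_i − 1)^c = 0 for all i, (t_i − 1)(t_it_j − 1)^{c−1} = 0 for all i ≠ j, and (t_1^e·t_2^e⋯t_n^e − 1)^n ≠ 0 for every integer e ≥ 1. -/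
open MvPolynomial

/-- The monomial ideal of `ℚ[X_1,…,X_n]` generated by all monomials
`X_1^{i_1}⋯X_n^{i_n}` with `i_1+⋯+i_n = c` and `i_j ≥ 2` for some `j`. -/
noncomputable def cIdeal (n c : ℕ) : Ideal (MvPolynomial (Fin n) ℚ) :=
  Ideal.span {m | ∃ d : Fin n → ℕ, (∑ i, d i) = c ∧ (∃ j, 2 ≤ d j) ∧
    m = ∏ i, X i ^ d i}

set_option linter.unusedVariables false

lemma mem1 {n c : ℕ} (hc : 3 ≤ c) {i j : Fin n} (hij : i ≠ j) (a b : ℕ)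
    (hab : a + b = c) (ha : 1 ≤ a) :
    (X i : MvPolynomial (Fin n) ℚ) ^ a * X j ^ b ∈ cIdeal n c := by
  apply Ideal.subset_span
  refine ⟨Pi.single i a + Pi.single j b, ?_, ?_, ?_⟩
  · simp [Finset.sum_add_distrib, Finset.sum_pi_single', hab]
  · rcases le_or_gt 2 a with h2 | h2
    · refine ⟨i, ?_⟩
      simp only [Pi.add_apply, Pi.single_eq_same, Pi.single_eq_of_ne hij.symm]
      omega
    · refine ⟨j, ?_⟩
      simp only [Pi.add_apply, Pi.single_eq_same, Pi.single_eq_of_ne hij]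
      omega
  · simp only [Pi.add_apply, pow_add, Finset.prod_mul_distrib]
    congr 1
    · rw [Finset.prod_eq_single i (fun k _ hk => by simp [Pi.single_eq_of_ne hk])
        (by simp), Pi.single_eq_same]
    · rw [Finset.prod_eq_single j (fun k _ hk => by simp [Pi.single_eq_of_ne hk])
        (by simp), Pi.single_eq_same]

variable {n : ℕ}

local notation "deg" => Finsupp.degree

lemma deg_add (d1 d2 : Fin n →₀ ℕ) : deg (d1 + d2) = deg d1 + deg d2 := by
  simp only [Finsupp.degree_eq_weight_one, map_add]

lemma deg_single (i : Fin n) (m : ℕ) : deg (Finsupp.single i m) = m := by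
  simp only [Finsupp.degree_eq_weight_one, Finsupp.weight_apply]
  simp [Finsupp.sum_single_index]

lemma deg_eq_zero {d : Fin n →₀ ℕ} (h : deg d = 0) : d = 0 :=
  (Finsupp.degree_eq_zero_iff d).mp h

lemma eq_single_of_deg_one {d : Fin n →₀ ℕ} (h : deg d = 1) : ∃ i, d = Finsupp.single i 1 := by
  have hd0 : d ≠ 0 := by
    intro h0; rw [h0] at h; simp [map_zero] at h
  obtain ⟨i, hi⟩ := Finsupp.support_nonempty_iff.mpr hd0
  have h1 : d i ≤ 1 := h ▸ Finsupp.le_degree i d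
  have h2 : 1 ≤ d i := Nat.one_le_iff_ne_zero.mpr (Finsupp.mem_support_iff.mp hi)
  have hdi : d i = 1 := le_antisymm h1 h2
  have hle : Finsupp.single i 1 ≤ d := by
    rw [Finsupp.le_def]
    intro j
    rcases eq_or_ne j i with rfl | hj
    · simp [hdi]
    · simp [Finsupp.single_eq_of_ne' (Ne.symm hj)]
  refine ⟨i, ?_⟩
  have hsplit : d = Finsupp.single i 1 + (d - Finsupp.single i 1) :=
    (add_tsub_cancel_of_le hle).symm
  have : deg (d - Finsupp.single i 1) = 0 := by
    have := congrArg deg hsplit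
    rw [deg_add, deg_single, h] at this
    omega
  rw [hsplit, deg_eq_zero this, add_zero]

lemma coeff_mul_lowdeg {p q : MvPolynomial (Fin n) ℚ} {a b : ℕ}
    (hp : ∀ d : Fin n →₀ ℕ, deg d < a → coeff d p = 0)
    (hq : ∀ d : Fin n →₀ ℕ, deg d < b → coeff d q = 0)
    {d : Fin n →₀ ℕ} (hd : deg d < a + b) : coeff d (p * q) = 0 := by
  rw [coeff_mul]
  apply Finset.sum_eq_zero
  rintro ⟨d1, d2⟩ hmem
  rw [Finset.HasAntidiagonal.mem_antidiagonal] at hmem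
  have hsum : deg d1 + deg d2 < a + b := by rw [← deg_add, hmem]; exact hd
  rcases lt_or_ge (deg d1) a with h | h
  · rw [hp d1 h, zero_mul]
  · rw [hq d2 (by omega), mul_zero]

lemma coeff_pow_lowdeg {p : MvPolynomial (Fin n) ℚ} (hp : coeff 0 p = 0) :
    ∀ (k : ℕ) (d : Fin n →₀ ℕ), deg d < k → coeff d (p ^ k) = 0 := by
  intro k
  induction k with
  | zero => intro d hd; omega
  | succ k ih =>
    intro d hd
    rw [pow_succ]
    exact coeff_mul_lowdeg (a := k) (b := 1) (fun d' hd' => ih d' hd')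
      (fun d' hd' => by
        have : d' = 0 := deg_eq_zero (by omega)
        rw [this]; exact hp) (by omega)

noncomputable def mu (S : Finset (Fin n)) : Fin n →₀ ℕ := ∑ i ∈ S, Finsupp.single i 1

lemma mu_apply (S : Finset (Fin n)) (i : Fin n) : mu S i = if i ∈ S then 1 else 0 := by
  classical
  rw [mu, Finset.sum_apply']
  simp [Finsupp.single_apply]

lemma deg_mu (S : Finset (Fin n)) : deg (mu S) = S.card := by
  rw [mu, Finsupp.degree_eq_weight_one, map_sum]
  rw [Finset.sum_congr rfl (fun i _ => by
    rw [← Finsupp.degree_eq_weight_one, deg_single])]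
  simp

lemma mu_erase {S : Finset (Fin n)} {i : Fin n} (hi : i ∈ S) :
    Finsupp.single i 1 + mu (S.erase i) = mu S :=
  Finset.add_sum_erase S _ hi

lemma coeff_mu_pow {p : MvPolynomial (Fin n) ℚ} (hp : coeff 0 p = 0) :
    ∀ S : Finset (Fin n), coeff (mu S) (p ^ S.card) =
      (Nat.factorial S.card : ℚ) * ∏ i ∈ S, coeff (Finsupp.single i 1) p := by
  intro S
  induction S using Finset.strongInduction with
  | _ S ih =>
    rcases S.eq_empty_or_nonempty with rfl | hS
    · simp [mu]
    · obtain ⟨k, hk⟩ : ∃ k, S.card = k + 1 :=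
        ⟨S.card - 1, (Nat.succ_pred_eq_of_pos (Finset.card_pos.mpr hS)).symm⟩
      rw [hk, pow_succ']
      rw [coeff_mul]
      classical
      set T : Finset ((Fin n →₀ ℕ) × (Fin n →₀ ℕ)) :=
        S.image (fun i => (Finsupp.single i 1, mu (S.erase i))) with hT
      have hTsub : T ⊆ Finset.HasAntidiagonal.antidiagonal (mu S) := by
        intro x hx
        rw [hT, Finset.mem_image] at hx
        obtain ⟨i, hi, rfl⟩ := hx
        rw [Finset.HasAntidiagonal.mem_antidiagonal]
        exact mu_erase hi
      have hzero : ∀ x ∈ Finset.HasAntidiagonal.antidiagonal (mu S), x ∉ T →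
          coeff x.1 p * coeff x.2 (p ^ k) = 0 := by
        rintro ⟨d1, d2⟩ hmem hnot
        rw [Finset.HasAntidiagonal.mem_antidiagonal] at hmem
        have hdeg : deg d1 + deg d2 = k + 1 := by
          rw [← deg_add, hmem, deg_mu, hk]
        rcases Nat.lt_or_ge (deg d1) 2 with h2 | h2
        · have h20 : deg d1 = 0 ∨ deg d1 = 1 := by omega
          rcases h20 with h | h
          · rw [deg_eq_zero h, hp, zero_mul]
          · obtain ⟨i, rfl⟩ := eq_single_of_deg_one h
            have hiS : i ∈ S := by
              by_contra hiS
              have := congrArg (fun f : Fin n →₀ ℕ => f i) hmem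
              simp only [Finsupp.add_apply, Finsupp.single_eq_same, mu_apply,
                if_neg hiS] at this
              omega
            have hd2 : d2 = mu (S.erase i) := by
              have h1 := mu_erase hiS
              rw [← hmem] at h1
              exact (add_left_cancel h1).symm
            exfalso
            apply hnot
            rw [hT, Finset.mem_image]
            exact ⟨i, hiS, by rw [hd2]⟩
        · rw [coeff_pow_lowdeg hp k d2 (by omega), mul_zero]
      rw [← Finset.sum_subset hTsub hzero]
      rw [hT, Finset.sum_image (by
        intro i _ j _ hij
        exact (Finsupp.single_left_inj one_ne_zero).mp (congrArg Prod.fst hij))]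
      have hstep : ∀ i ∈ S, coeff (Finsupp.single i 1) p * coeff (mu (S.erase i)) (p ^ k) =
          (Nat.factorial k : ℚ) * (coeff (Finsupp.single i 1) p * ∏ j ∈ S.erase i, coeff (Finsupp.single j 1) p) := by
        intro i hi
        have hcard : (S.erase i).card = k := by
          rw [Finset.card_erase_of_mem hi, hk]; rfl
        have := ih (S.erase i) (Finset.erase_ssubset hi)
        rw [hcard] at this
        rw [this]; ring
      rw [Finset.sum_congr rfl hstep]
      have hprod : ∀ i ∈ S, coeff (Finsupp.single i 1) p * ∏ j ∈ S.erase i, coeff (Finsupp.single j 1) p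
          = ∏ j ∈ S, coeff (Finsupp.single j 1) p := fun i hi => Finset.mul_prod_erase S (fun j => coeff (Finsupp.single j 1) p) hi
      rw [Finset.sum_congr rfl (fun i hi => by rw [hprod i hi])]
      rw [Finset.sum_const, hk, Nat.factorial_succ]
      push_cast
      ring

lemma coeff_mu_vanish {n c : ℕ} {f : MvPolynomial (Fin n) ℚ} (hf : f ∈ cIdeal n c) :
    coeff (mu Finset.univ) f = 0 := by
  classical
  have key : ∀ f ∈ cIdeal n c, ∀ r : MvPolynomial (Fin n) ℚ,
      coeff (mu Finset.univ) (r * f) = 0 := by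
    intro f hf
    refine Submodule.span_induction ?_ ?_ ?_ ?_ hf
    · rintro x ⟨d, hdsum, ⟨j, hj⟩, rfl⟩ r
      set D : Fin n →₀ ℕ := Finsupp.equivFunOnFinite.symm d with hD
      have hDd : ∀ i, D i = d i := fun i => rfl
      have hmon : (∏ i, (X i : MvPolynomial (Fin n) ℚ) ^ d i) = monomial D 1 := by
        have h1 : (∏ i ∈ D.support, (X i : MvPolynomial (Fin n) ℚ) ^ D i) = ∏ i, X i ^ D i :=
          Finset.prod_subset (Finset.subset_univ _)
            (fun i _ hi => by rw [Finsupp.notMem_support_iff.mp hi, pow_zero])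
        rw [← prod_X_pow_eq_monomial, h1]
        exact Finset.prod_congr rfl (fun i _ => by rw [hDd])
      rw [hmon, coeff_mul_monomial']
      rw [if_neg]
      intro hle
      have h1 : D j ≤ mu Finset.univ j := hle j
      rw [hDd, mu_apply] at h1
      simp at h1
      omega
    · intro r; rw [mul_zero, coeff_zero]
    · intro x y _ _ hx hy r
      rw [mul_add, coeff_add, hx, hy, add_zero]
    · intro a x _ hx r
      rw [smul_eq_mul, ← mul_assoc, hx]
  have := key f hf 1
  rwa [one_mul] at this

lemma coeff_single_mul (i : Fin n) (p q : MvPolynomial (Fin n) ℚ) :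
    coeff (Finsupp.single i 1) (p * q) =
      constantCoeff p * coeff (Finsupp.single i 1) q +
        coeff (Finsupp.single i 1) p * constantCoeff q := by
  rw [constantCoeff_eq]
  have hanti : Finset.HasAntidiagonal.antidiagonal (Finsupp.single i 1) =
      {((0 : Fin n →₀ ℕ), Finsupp.single i 1), (Finsupp.single i 1, 0)} := by
    ext ⟨d1, d2⟩
    rw [Finset.HasAntidiagonal.mem_antidiagonal]
    constructor
    · intro h
      have hdeg : deg d1 + deg d2 = 1 := by rw [← deg_add, h, deg_single]
      rcases Nat.eq_zero_or_pos (deg d1) with h1 | h1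
      · have : d1 = 0 := deg_eq_zero h1
        subst this
        rw [zero_add] at h
        exact Finset.mem_insert.mpr (Or.inl (Prod.ext rfl h))
      · have h2 : deg d2 = 0 := by omega
        have : d2 = 0 := deg_eq_zero h2
        subst this
        rw [add_zero] at h
        exact Finset.mem_insert.mpr (Or.inr (Finset.mem_singleton.mpr (Prod.ext h rfl)))
    · intro h
      rcases Finset.mem_insert.mp h with h | h
      · rw [Prod.mk.injEq] at h
        rw [h.1, h.2, zero_add]
      · rw [Finset.mem_singleton, Prod.mk.injEq] at h
        rw [h.1, h.2, add_zero]
  rw [coeff_mul, hanti, Finset.sum_insert (by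
    simp only [Finset.mem_singleton, Prod.mk.injEq, not_and]
    intro h0
    exact absurd h0.symm (by simp [Finsupp.single_eq_zero])), Finset.sum_singleton]

lemma cc_pow_Xadd1 (j : Fin n) (e : ℕ) :
    constantCoeff ((X j + 1 : MvPolynomial (Fin n) ℚ) ^ e) = 1 := by
  rw [map_pow, map_add, constantCoeff_X, map_one, zero_add, one_pow]

lemma coeff_single_pow_Xadd1 (i j : Fin n) (e : ℕ) :
    coeff (Finsupp.single i 1) ((X j + 1 : MvPolynomial (Fin n) ℚ) ^ e) =
      if j = i then (e : ℚ) else 0 := by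
  have hXj : coeff (Finsupp.single i 1) (X j + 1 : MvPolynomial (Fin n) ℚ) =
      if j = i then 1 else 0 := by
    rw [coeff_add, coeff_X', coeff_one,
      if_neg (show ¬(0 : Fin n →₀ ℕ) = Finsupp.single i 1 by simp [eq_comm, Finsupp.single_eq_zero]),
      add_zero]
    simp [Finsupp.single_left_inj (one_ne_zero (α := ℕ))]
  induction e with
  | zero =>
    rw [pow_zero, coeff_one, if_neg (by simp [eq_comm, Finsupp.single_eq_zero])]
    simp
  | succ e ih =>
    rw [pow_succ, coeff_single_mul, ih, hXj, cc_pow_Xadd1, map_add, constantCoeff_X, map_one,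
      zero_add]
    rcases eq_or_ne j i with rfl | hji
    · rw [if_pos rfl, if_pos rfl, if_pos rfl]; push_cast; ring
    · simp [hji]

lemma coeff_single_prodP (i : Fin n) (e : ℕ) :
    ∀ s : Finset (Fin n),
      coeff (Finsupp.single i 1) (∏ j ∈ s, (X j + 1 : MvPolynomial (Fin n) ℚ) ^ e) =
        if i ∈ s then (e : ℚ) else 0 := by
  intro s
  classical
  induction s using Finset.induction with
  | empty =>
    rw [Finset.prod_empty, coeff_one, if_neg (by simp [eq_comm, Finsupp.single_eq_zero])]
    simp
  | @insert j s hj ih =>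
    rw [Finset.prod_insert hj, coeff_single_mul, ih, cc_pow_Xadd1, map_prod,
      Finset.prod_congr rfl (fun k _ => cc_pow_Xadd1 k e), Finset.prod_const_one,
      coeff_single_pow_Xadd1]
    rcases eq_or_ne j i with rfl | hji
    · rw [if_pos rfl, if_pos (Finset.mem_insert_self j s), if_neg hj]
      ring
    · rw [if_neg hji]
      by_cases his : i ∈ s
      · rw [if_pos his, if_pos (Finset.mem_insert_of_mem his)]
        ring
      · rw [if_neg his, if_neg (by simp [hji.symm, his])]
        ring

lemma coeff_mu_g (e : ℕ) :
    coeff (mu (Finset.univ : Finset (Fin n)))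
      (((∏ i, (X i + 1 : MvPolynomial (Fin n) ℚ) ^ e) - 1) ^ n) =
      (Nat.factorial n : ℚ) * (e : ℚ) ^ n := by
  classical
  set P : MvPolynomial (Fin n) ℚ := ∏ i, (X i + 1) ^ e with hP
  have hcc : constantCoeff P = 1 := by
    rw [hP, map_prod, Finset.prod_congr rfl (fun k _ => cc_pow_Xadd1 k e),
      Finset.prod_const_one]
  have hp0 : coeff 0 (P - 1) = 0 := by
    rw [coeff_sub, ← constantCoeff_eq, hcc, map_one]
    ring
  have hsingle : ∀ i : Fin n, coeff (Finsupp.single i 1) (P - 1) = (e : ℚ) := by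
    intro i
    rw [coeff_sub, hP, coeff_single_prodP, if_pos (Finset.mem_univ i), coeff_one,
      if_neg (show ¬(0 : Fin n →₀ ℕ) = Finsupp.single i 1 by
        simp [eq_comm, Finsupp.single_eq_zero]), sub_zero]
  have := coeff_mu_pow hp0 Finset.univ
  rw [Finset.card_univ, Fintype.card_fin] at this
  rw [this, Finset.prod_congr rfl (fun i _ => hsingle i), Finset.prod_const, Finset.card_univ,
    Fintype.card_fin]

lemma mem_d {n c : ℕ} (hc : 3 ≤ c) {i j : Fin n} (hij : i ≠ j) :
    (X i : MvPolynomial (Fin n) ℚ) * ((X i + 1) * (X j + 1) - 1) ^ (c - 1) ∈ cIdeal n c := by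
  have hexp : ((X i : MvPolynomial (Fin n) ℚ) + 1) * (X j + 1) - 1 =
      X i * (X j + 1) + X j := by ring
  rw [hexp, add_pow, Finset.mul_sum]
  apply Ideal.sum_mem
  intro k hk
  rw [Finset.mem_range] at hk
  have hk' : k ≤ c - 1 := by omega
  have heq : (X i : MvPolynomial (Fin n) ℚ) *
      ((X i * (X j + 1)) ^ k * X j ^ (c - 1 - k) * ((c-1).choose k : MvPolynomial (Fin n) ℚ)) =
      (X i ^ (k + 1) * X j ^ (c - 1 - k)) * ((X j + 1) ^ k * (((c-1).choose k : ℕ) : MvPolynomial (Fin n) ℚ)) := by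
    rw [mul_pow]; ring
  rw [heq]
  exact Ideal.mul_mem_right _ _ (mem1 hc hij (k + 1) (c - 1 - k) (by omega) (by omega))

lemma Xpow_mem {n c : ℕ} (hc : 3 ≤ c) (hn : c ≤ n) (i : Fin n) :
    (X i : MvPolynomial (Fin n) ℚ) ^ c ∈ cIdeal n c := by
  obtain ⟨j, hj⟩ := Fintype.exists_ne_of_one_lt_card (by simp; omega) i
  have := mem1 hc (Ne.symm hj) c 0 (by omega) (by omega)
  rwa [pow_zero, mul_one] at this

set_option synthInstance.maxHeartbeats 1000000 in
set_option maxHeartbeats 2000000 in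
theorem mul_by_X_add_one_endomorphisms (n c : ℕ) (hc : 3 ≤ c) (hn : c ≤ n) :
    ∀ t : Fin n → Module.End ℚ (MvPolynomial (Fin n) ℚ ⧸ cIdeal n c),
      (t = fun i => LinearMap.mulLeft ℚ (Ideal.Quotient.mk (cIdeal n c) (X i + 1))) →
      (∀ i j, Commute (t i) (t j)) ∧
      (∀ i, IsUnit (t i)) ∧
      (∀ i, (t i - 1) ^ c = 0) ∧
      (∀ i j, i ≠ j → (t i - 1) * (t i * t j - 1) ^ (c - 1) = 0) ∧
      (∀ e : ℕ, 1 ≤ e → ((List.ofFn fun i => t i ^ e).prod - 1) ^ n ≠ 0) := by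
  intro t ht
  set A := MvPolynomial (Fin n) ℚ ⧸ cIdeal n c with hA
  set mk := Ideal.Quotient.mk (cIdeal n c) with hmk
  set φ : A →ₐ[ℚ] Module.End ℚ A := Algebra.lmul ℚ A with hφdef
  have hφ : ∀ a : A, LinearMap.mulLeft ℚ a = φ a := fun a => LinearMap.ext fun b => rfl
  have ht' : ∀ i, t i = φ (mk (X i + 1)) := fun i => by rw [ht]; exact hφ _
  have hXc : ∀ i : Fin n, (mk (X i)) ^ c = 0 := by
    intro i
    rw [← map_pow, hmk, Ideal.Quotient.eq_zero_iff_mem]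
    exact Xpow_mem hc hn i
  refine ⟨?_, ?_, ?_, ?_, ?_⟩
  · intro i j
    rw [ht' i, ht' j]
    exact (Commute.all _ _).map φ
  · intro i
    rw [ht' i]
    have : IsUnit (mk (X i + 1)) := by
      have hnil : IsNilpotent (mk (X i)) := ⟨c, hXc i⟩
      have h := hnil.isUnit_add_one
      rwa [← map_one mk, ← map_add] at h
    exact this.map φ
  · intro i
    rw [ht' i]
    have h1 : φ (mk (X i + 1)) - 1 = φ (mk (X i)) := by
      rw [← map_one φ, ← map_sub, ← map_one mk, ← map_sub]
      congr 1
      ring_nf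
    rw [h1, ← map_pow φ, hXc i, map_zero]
  · intro i j hij
    rw [ht' i, ht' j]
    have h1 : φ (mk (X i + 1)) - 1 = φ (mk (X i)) := by
      rw [← map_one φ, ← map_sub, ← map_one mk, ← map_sub]
      congr 1
      ring_nf
    have h2 : φ (mk ((X i + 1) * (X j + 1) - 1)) =
        φ (mk (X i + 1)) * φ (mk (X j + 1)) - 1 := by
      rw [map_sub mk, map_mul mk, map_one mk, map_sub φ, map_mul φ, map_one φ]
    rw [h1, ← h2, ← map_pow φ, ← map_mul φ, ← map_pow mk, ← map_mul mk]
    have : mk (X i * ((X i + 1) * (X j + 1) - 1) ^ (c - 1)) = 0 := by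
      rw [hmk, Ideal.Quotient.eq_zero_iff_mem]
      exact mem_d hc hij
    rw [this, map_zero]
  · intro e he hcontra
    have hlist : (List.ofFn fun i => t i ^ e) =
        List.map (φ ∘ mk) (List.ofFn fun i => (X i + 1) ^ e) := by
      rw [List.map_ofFn]
      congr 1
      funext i
      show t i ^ e = φ (mk ((X i + 1) ^ e))
      rw [ht' i, ← map_pow, ← map_pow]
    have hprod : (List.ofFn fun i => t i ^ e).prod =
        φ (mk (∏ i, (X i + 1 : MvPolynomial (Fin n) ℚ) ^ e)) := by
      rw [hlist, ← List.map_map, ← map_list_prod φ, ← map_list_prod mk, List.prod_ofFn]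
    rw [hprod] at hcontra
    have hzero : mk (((∏ i, (X i + 1 : MvPolynomial (Fin n) ℚ) ^ e) - 1) ^ n) = 0 := by
      have h3 : φ (mk (((∏ i, (X i + 1 : MvPolynomial (Fin n) ℚ) ^ e) - 1) ^ n)) = 0 := by
        rw [map_pow, map_sub, map_one, map_pow, map_sub, map_one]
        exact hcontra
      have h4 := congrArg (fun f : Module.End ℚ A => f 1) h3
      simpa [hφdef, Algebra.coe_lmul_eq_mul, LinearMap.mul_apply'] using h4
    rw [hmk, Ideal.Quotient.eq_zero_iff_mem] at hzero
    have hv := coeff_mu_vanish hzero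
    rw [coeff_mu_g] at hv
    have h5 : (Nat.factorial n : ℚ) ≠ 0 := Nat.cast_ne_zero.mpr (Nat.factorial_ne_zero n)
    have h6 : (e : ℚ) ^ n ≠ 0 := pow_ne_zero _ (Nat.cast_ne_zero.mpr (by omega))
    exact (mul_ne_zero h5 h6) hv
end
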